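/- Let K, R ∈ [0,1]^{N×N} agree on all entries involving outliers except that R_{ij} = γ there, let X⁰ ∈ [0,1]^{N×N} be supported on the inlier block, and let X̂ ∈ [0,1]^{N×N} maximize ⟨K − γE, X⟩ over [0,1]^{N×N}. Then ⟨R − γE, X⁰ − X̂⟩ ≤ 2‖K_I − R_I‖₁, where K_I, R_I denote restrictions to the inlier index set. -/
import Mathlib


open Finset

/-- the reference-objective gap is bounded by twice the ℓ₁ distance
between the kernel and reference matrices on the inlier block. -/
theorem stmt_2 (N : ℕ) (inlier : Fin N → Prop) [DecidablePred inlier]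
    (K R X0 Xhat : Matrix (Fin N) (Fin N) ℝ) (γ : ℝ)
    (hKbd : ∀ i j, 0 ≤ K i j ∧ K i j ≤ 1)
    (hRbd : ∀ i j, 0 ≤ R i j ∧ R i j ≤ 1)
    (hRout : ∀ i j, (¬ inlier i ∨ ¬ inlier j) → R i j = γ)
    (hX0bd : ∀ i j, 0 ≤ X0 i j ∧ X0 i j ≤ 1)
    (hX0out : ∀ i j, (¬ inlier i ∨ ¬ inlier j) → X0 i j = 0)
    (hXhatbd : ∀ i j, 0 ≤ Xhat i j ∧ Xhat i j ≤ 1)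
    (hXhatmax : ∀ X : Matrix (Fin N) (Fin N) ℝ, (∀ i j, 0 ≤ X i j ∧ X i j ≤ 1) →
      ∑ i, ∑ j, (K i j - γ) * X i j ≤ ∑ i, ∑ j, (K i j - γ) * Xhat i j) :
    ∑ i, ∑ j, (R i j - γ) * (X0 i j - Xhat i j) ≤
      2 * ∑ i, ∑ j, (if inlier i ∧ inlier j then |K i j - R i j| else 0) := by
  classical
  set X : Matrix (Fin N) (Fin N) ℝ :=
    fun i j => if inlier i ∧ inlier j then X0 i j else Xhat i j with hX
  have hXbd : ∀ i j, 0 ≤ X i j ∧ X i j ≤ 1 := by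
    intro i j
    simp only [hX]
    split
    · exact hX0bd i j
    · exact hXhatbd i j
  have hopt := hXhatmax X hXbd
  -- second piece is ≤ 0
  have h2 : ∑ i, ∑ j, (if inlier i ∧ inlier j then (K i j - γ) * (X0 i j - Xhat i j) else 0) ≤ 0 := by
    have heq : ∑ i, ∑ j, (if inlier i ∧ inlier j then (K i j - γ) * (X0 i j - Xhat i j) else 0)
        = (∑ i, ∑ j, (K i j - γ) * X i j) - ∑ i, ∑ j, (K i j - γ) * Xhat i j := by
      rw [← Finset.sum_sub_distrib]
      apply Finset.sum_congr rfl; intro i _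
      rw [← Finset.sum_sub_distrib]
      apply Finset.sum_congr rfl; intro j _
      simp only [hX]
      split
      · ring
      · ring
    rw [heq]
    linarith
  -- rewrite LHS as sum over inlier block
  have hLHS : ∑ i, ∑ j, (R i j - γ) * (X0 i j - Xhat i j)
      = (∑ i, ∑ j, (if inlier i ∧ inlier j then (R i j - K i j) * (X0 i j - Xhat i j) else 0))
        + ∑ i, ∑ j, (if inlier i ∧ inlier j then (K i j - γ) * (X0 i j - Xhat i j) else 0) := by
    rw [← Finset.sum_add_distrib]
    apply Finset.sum_congr rfl; intro i _
    rw [← Finset.sum_add_distrib]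
    apply Finset.sum_congr rfl; intro j _
    by_cases h : inlier i ∧ inlier j
    · simp only [if_pos h]; ring
    · simp only [if_neg h]
      have : R i j = γ := hRout i j (by tauto)
      rw [this]; ring
  -- first piece ≤ ∑ |K - R|
  have h1 : ∑ i, ∑ j, (if inlier i ∧ inlier j then (R i j - K i j) * (X0 i j - Xhat i j) else 0)
      ≤ ∑ i, ∑ j, (if inlier i ∧ inlier j then |K i j - R i j| else 0) := by
    apply Finset.sum_le_sum; intro i _
    apply Finset.sum_le_sum; intro j _
    by_cases h : inlier i ∧ inlier j
    · simp only [if_pos h]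
      have hd : |X0 i j - Xhat i j| ≤ 1 := by
        have := hX0bd i j; have := hXhatbd i j
        rw [abs_le]; constructor <;> linarith
      calc (R i j - K i j) * (X0 i j - Xhat i j)
          ≤ |(R i j - K i j) * (X0 i j - Xhat i j)| := le_abs_self _
        _ = |K i j - R i j| * |X0 i j - Xhat i j| := by
            rw [abs_mul, abs_sub_comm]
        _ ≤ |K i j - R i j| * 1 := by
            exact mul_le_mul_of_nonneg_left hd (abs_nonneg _)
        _ = |K i j - R i j| := mul_one _
    · simp [h]
  -- the ℓ₁ sum is nonnegative
  have hnn : 0 ≤ ∑ i, ∑ j, (if inlier i ∧ inlier j then |K i j - R i j| else 0) := by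
    apply Finset.sum_nonneg; intro i _
    apply Finset.sum_nonneg; intro j _
    split
    · exact abs_nonneg _
    · exact le_refl 0
  rw [hLHS]
  linarith
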